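/- arXiv:2403.00230 — 2 statements merged into one kernel-verified Lean document; each statement's English description precedes it below -/
import Mathlib

section
/- Assume M_j is reversible with respect to Π_j with ‖Π_{j-1}/Π_j‖_∞ < ∞. Let f_{j-1} ∈ L²(Π_{j-1}) with Π_{j-1}(f_{j-1}) = 1 and let f_j = M̄_j f_{j-1}. Then Var_j(f_j) ≤ (1 − λ_j + α_j) Var_{j-1}(f_{j-1}) + α_j, where λ_j is the spectral gap of Q_j and α_j the discrepancy coefficient. -/
open MeasureTheory ProbabilityTheory

/-- Reversibility of a kernel `M` with respect to a measure `π` (detailed balance). -/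
def IsReversible {Θ : Type*} [MeasurableSpace Θ] (M : Kernel Θ Θ) (π : Measure Θ) : Prop :=
  ∀ A B : Set Θ, MeasurableSet A → MeasurableSet B →
    ∫⁻ x in A, M x B ∂π = ∫⁻ x in B, M x A ∂π

/-- `M̄ f(u) = ∫ M(u,dv) f(v) r(v)`, where `r = Π_{j-1}/Π_j` is the density ratio. -/
noncomputable def mbar {Θ : Type*} [MeasurableSpace Θ] (M : Kernel Θ Θ) (r : Θ → ℝ)
    (f : Θ → ℝ) (u : Θ) : ℝ :=
  ∫ v, f v * r v ∂(M u)

/-- The finite kernel `Q_j(x, ·) = ∫ M(x,dy) ∫_· M(y,dz) r(z)` where `r = Π_{j-1}/Π_j`. -/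
noncomputable def Qmeas {Θ : Type*} [MeasurableSpace Θ] (M : Kernel Θ Θ) (r : Θ → ℝ)
    (x : Θ) : Measure Θ :=
  (M x).bind (fun y => (M y).withDensity (fun z => ENNReal.ofReal (r z)))

/-- `Var_π(f) = π(f²) − π(f)²`. -/
noncomputable def varI {Θ : Type*} [MeasurableSpace Θ] (π : Measure Θ) (f : Θ → ℝ) : ℝ :=
  (∫ x, (f x) ^ 2 ∂π) - (∫ x, f x ∂π) ^ 2

/-- The discrepancy coefficient
`α_j = sup{ ∫ Π_{j-1}(dx) f²(x) ∫ M_j²(x,dz) |r(z) − 1| : Π_{j-1}(f²) = 1 }`. -/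
noncomputable def discrepancy {Θ : Type*} [MeasurableSpace Θ] (πprev : Measure Θ)
    (M : Kernel Θ Θ) (r : Θ → ℝ) : ℝ :=
  sSup {a : ℝ | ∃ f : Θ → ℝ, Measurable f ∧ Integrable (fun x => (f x) ^ 2) πprev ∧
    (∫ x, (f x) ^ 2 ∂πprev) = 1 ∧
    a = ∫ x, (f x) ^ 2 * (∫ z, |r z - 1| ∂((M x).bind (fun y => M y))) ∂πprev}

/-- The spectral gap `λ_j = inf{ G_j(f) : f ∈ L²(Π_{j-1}), Var_{j-1}(f) > 0 }` of `Q_j`. -/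
noncomputable def specGap {Θ : Type*} [MeasurableSpace Θ] (πprev : Measure Θ)
    (M : Kernel Θ Θ) (r : Θ → ℝ) : ℝ :=
  sInf {g : ℝ | ∃ f : Θ → ℝ, Measurable f ∧ Integrable (fun x => (f x) ^ 2) πprev ∧
    0 < varI πprev f ∧
    g = (∫ x, (∫ y, (f y - f x) ^ 2 ∂(Qmeas M r x)) ∂πprev) /
        (∫ x, (∫ y, (f y - f x) ^ 2 ∂πprev) ∂πprev)}

section Aux

variable {Θ : Type*} [MeasurableSpace Θ]

lemma rev_compProd_symm (π : Measure Θ) [IsProbabilityMeasure π] (M : Kernel Θ Θ)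
    [IsMarkovKernel M] (hrev : IsReversible M π) :
    (π ⊗ₘ M).map Prod.swap = π ⊗ₘ M := by
  refine ext_of_generate_finite _ generateFrom_prod.symm isPiSystem_prod ?_ ?_
  · rintro s ⟨A, hA, B, hB, rfl⟩
    simp only [Set.mem_setOf_eq] at hA hB
    rw [Measure.map_apply measurable_swap (hA.prod hB)]
    have hsw : Prod.swap ⁻¹' (A ×ˢ B) = B ×ˢ A := by
      ext p; simp [and_comm]
    rw [hsw, Measure.compProd_apply_prod hB hA, Measure.compProd_apply_prod hA hB]
    exact (hrev B A hB hA)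
  · simp [Measure.map_apply measurable_swap MeasurableSet.univ]

lemma rev_swap (π : Measure Θ) [IsProbabilityMeasure π] (M : Kernel Θ Θ)
    [IsMarkovKernel M] (hrev : IsReversible M π) {φ : Θ → Θ → ENNReal}
    (hφ : Measurable (Function.uncurry φ)) :
    ∫⁻ x, ∫⁻ y, φ x y ∂(M x) ∂π = ∫⁻ y, ∫⁻ x, φ x y ∂(M y) ∂π := by
  have h1 : ∫⁻ x, ∫⁻ y, φ x y ∂(M x) ∂π = ∫⁻ p : Θ × Θ, φ p.1 p.2 ∂(π ⊗ₘ M) :=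
    (Measure.lintegral_compProd hφ).symm
  have h2 : ∫⁻ y, ∫⁻ x, φ x y ∂(M y) ∂π = ∫⁻ p : Θ × Θ, φ p.2 p.1 ∂(π ⊗ₘ M) :=
    (Measure.lintegral_compProd (hφ.comp measurable_swap)).symm
  rw [h1, h2]
  conv_lhs => rw [← rev_compProd_symm π M hrev]
  exact lintegral_map (f := fun p : Θ × Θ => φ p.1 p.2) (g := Prod.swap)
    hφ measurable_swap

lemma rev_invariant (π : Measure Θ) [IsProbabilityMeasure π] (M : Kernel Θ Θ)
    [IsMarkovKernel M] (hrev : IsReversible M π) {g : Θ → ENNReal}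
    (hg : Measurable g) :
    ∫⁻ x, ∫⁻ y, g y ∂(M x) ∂π = ∫⁻ y, g y ∂π := by
  have := rev_swap π M hrev (φ := fun x y => g y)
    (hφ := hg.comp measurable_snd)
  rw [this]
  simp [lintegral_const]

end Aux

theorem variance_contraction
    {Θ : Type*} [MeasurableSpace Θ]
    (πprev πcur : Measure Θ)
    (hπprev : IsProbabilityMeasure πprev) (hπcur : IsProbabilityMeasure πcur)
    (M : Kernel Θ Θ) (hM : IsMarkovKernel M)
    (hrev : IsReversible M πcur)
    (r : Θ → ℝ) (hrmeas : Measurable r) (hrnonneg : ∀ z, 0 ≤ r z)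
    (hdens : πprev = πcur.withDensity (fun z => ENNReal.ofReal (r z)))
    (ρ : ℝ) (hρ : ∀ z, r z ≤ ρ)
    (f : Θ → ℝ) (hfmeas : Measurable f) (hfnonneg : ∀ x, 0 ≤ f x)
    (hfL2 : Integrable (fun x => (f x) ^ 2) πprev)
    (hfdens : (∫ x, f x ∂πprev) = 1) :
    varI πcur (mbar M r f) ≤
      (1 - specGap πprev M r + discrepancy πprev M r) * varI πprev f
        + discrepancy πprev M r := by
  classical
  -- basic setup
  have hρ0 : 0 ≤ ρ := by
    rcases isEmpty_or_nonempty Θ with hE | hNE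
    · exfalso
      have h1 : πprev Set.univ = 1 := hπprev.measure_univ
      rw [Set.univ_eq_empty_iff.mpr hE, measure_empty] at h1
      exact zero_ne_one h1
    · obtain ⟨z₀⟩ := hNE
      exact le_trans (hrnonneg z₀) (hρ z₀)
  set R : Θ → ENNReal := fun z => ENNReal.ofReal (r z) with hRdef
  set F : Θ → ENNReal := fun x => ENNReal.ofReal (f x) with hFdef
  have hRm : Measurable R := hrmeas.ennreal_ofReal
  have hFm : Measurable F := hfmeas.ennreal_ofReal
  have hFRm : Measurable fun v => F v * R v := hFm.mul hRm
  set N : Kernel Θ Θ := M ∘ₖ M with hNdef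
  have hNx : ∀ x : Θ, N x = (M x).bind (⇑M) := fun x => Kernel.comp_apply M M x
  -- conversion of πprev-lintegrals to πcur-lintegrals
  have hprev : ∀ {g : Θ → ENNReal}, Measurable g →
      ∫⁻ x, g x ∂πprev = ∫⁻ x, R x * g x ∂πcur := by
    intro g hg
    rw [hdens, lintegral_withDensity_eq_lintegral_mul _ hrmeas.ennreal_ofReal hg]
    rfl
  -- lintegrals over the two-step kernel
  have hbind : ∀ {g : Θ → ENNReal}, Measurable g → ∀ x : Θ,
      ∫⁻ z, g z ∂(N x) = ∫⁻ y, ∫⁻ z, g z ∂(M y) ∂(M x) := by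
    intro g hg x
    rw [hNx x]
    exact Measure.lintegral_bind M.measurable.aemeasurable hg.aemeasurable
  set G : Θ → ENNReal := fun u => ∫⁻ v, F v * R v ∂(M u) with hGdef
  have hGm : Measurable G :=
    Measurable.lintegral_kernel_prod_right' (κ := M) (hFRm.comp measurable_snd)
  set T : Θ → ENNReal := fun x => ∫⁻ z, F z * R z ∂(N x) with hTdef
  have hTm : Measurable T :=
    Measurable.lintegral_kernel_prod_right' (κ := N) (hFRm.comp measurable_snd)
  set B : ENNReal := ∫⁻ u, G u ^ 2 ∂πcur with hBdef
  -- Step A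
  have hA : B = ∫⁻ x, F x * T x ∂πprev := by
    calc B = ∫⁻ u, (∫⁻ v, (F v * R v) * G u ∂(M u)) ∂πcur := by
          refine lintegral_congr fun u => ?_
          rw [pow_two, lintegral_mul_const _ hFRm]
      _ = ∫⁻ v, (∫⁻ u, (F v * R v) * G u ∂(M v)) ∂πcur :=
          rev_swap πcur M hrev ((hFRm.comp measurable_snd).mul (hGm.comp measurable_fst))
      _ = ∫⁻ v, (F v * R v) * (∫⁻ u, G u ∂(M v)) ∂πcur :=
          lintegral_congr fun v => lintegral_const_mul _ hGm
      _ = ∫⁻ v, R v * (F v * T v) ∂πcur := by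
          refine lintegral_congr fun v => ?_
          have hTv : (∫⁻ u, G u ∂(M v)) = T v := (hbind hFRm v).symm
          rw [hTv]; ring
      _ = ∫⁻ x, F x * T x ∂πprev := (hprev (hFm.mul hTm)).symm
  -- gap and mass quantities
  set Ngap : ENNReal :=
    ∫⁻ x, (∫⁻ z, ENNReal.ofReal ((f z - f x) ^ 2) * R z ∂(N x)) ∂πprev with hNgapdef
  set Mass : ENNReal := ∫⁻ x, (∫⁻ z, F x ^ 2 * R z ∂(N x)) ∂πprev with hMassdef
  set Mass' : ENNReal := ∫⁻ x, (∫⁻ z, F z ^ 2 * R z ∂(N x)) ∂πprev with hMass'def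
  -- Step B : energy decomposition
  have hIFFm : Measurable fun x => ∫⁻ z, (F x * F z) * R z ∂(N x) :=
    Measurable.lintegral_kernel_prod_right' (κ := N)
      (((hFm.comp measurable_fst).mul (hFm.comp measurable_snd)).mul (hRm.comp measurable_snd))
  have hIMm : Measurable fun x => ∫⁻ z, F x ^ 2 * R z ∂(N x) :=
    Measurable.lintegral_kernel_prod_right' (κ := N)
      (((hFm.comp measurable_fst).pow_const 2).mul (hRm.comp measurable_snd))
  have hIM'm : Measurable fun x => ∫⁻ z, F z ^ 2 * R z ∂(N x) :=
    Measurable.lintegral_kernel_prod_right' (κ := N)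
      (((hFm.comp measurable_snd).pow_const 2).mul (hRm.comp measurable_snd))
  have hE1 : 2 * B + Ngap = Mass + Mass' := by
    have hFT : ∫⁻ x, F x * T x ∂πprev
        = ∫⁻ x, (∫⁻ z, (F x * F z) * R z ∂(N x)) ∂πprev := by
      refine lintegral_congr fun x => ?_
      calc F x * T x = ∫⁻ z, F x * (F z * R z) ∂(N x) :=
            (lintegral_const_mul (F x) hFRm).symm
        _ = ∫⁻ z, (F x * F z) * R z ∂(N x) :=
            lintegral_congr fun z => by ring
    have hpt : ∀ x z : Θ, (2 : ENNReal) * (F x * F z) + ENNReal.ofReal ((f z - f x) ^ 2)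
        = F x ^ 2 + F z ^ 2 := by
      intro x z
      have key2 : (2 : ℝ) * (f x * f z) + (f z - f x) ^ 2 = f x ^ 2 + f z ^ 2 := by ring
      have e1 : F x * F z = ENNReal.ofReal (f x * f z) :=
        (ENNReal.ofReal_mul (hfnonneg x)).symm
      have e2 : (2 : ENNReal) * ENNReal.ofReal (f x * f z)
          = ENNReal.ofReal (2 * (f x * f z)) := by
        rw [ENNReal.ofReal_mul (by norm_num : (0:ℝ) ≤ 2)]
        norm_num
      calc (2 : ENNReal) * (F x * F z) + ENNReal.ofReal ((f z - f x) ^ 2)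
          = ENNReal.ofReal (2 * (f x * f z)) + ENNReal.ofReal ((f z - f x) ^ 2) := by
            rw [e1, e2]
        _ = ENNReal.ofReal (2 * (f x * f z) + (f z - f x) ^ 2) :=
            (ENNReal.ofReal_add (by nlinarith [mul_nonneg (hfnonneg x) (hfnonneg z)])
              (sq_nonneg _)).symm
        _ = ENNReal.ofReal (f x ^ 2 + f z ^ 2) := by rw [key2]
        _ = F x ^ 2 + F z ^ 2 := by
            rw [ENNReal.ofReal_add (sq_nonneg _) (sq_nonneg _), hFdef,
              ENNReal.ofReal_pow (hfnonneg x), ENNReal.ofReal_pow (hfnonneg z)]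
    have key : ∀ x : Θ, 2 * (∫⁻ z, (F x * F z) * R z ∂(N x))
        + (∫⁻ z, ENNReal.ofReal ((f z - f x) ^ 2) * R z ∂(N x))
        = (∫⁻ z, F x ^ 2 * R z ∂(N x)) + (∫⁻ z, F z ^ 2 * R z ∂(N x)) := by
      intro x
      have m1 : Measurable fun z => (F x * F z) * R z :=
        ((measurable_const.mul hFm).mul hRm)
      have m2 : Measurable fun z => ENNReal.ofReal ((f z - f x) ^ 2) * R z :=
        (((hfmeas.sub measurable_const).pow_const 2).ennreal_ofReal).mul hRm
      have m3 : Measurable fun z => F x ^ 2 * R z := measurable_const.mul hRm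
      rw [← lintegral_const_mul 2 m1, ← lintegral_add_left (m1.const_mul 2),
        ← lintegral_add_left m3]
      refine lintegral_congr fun z => ?_
      calc 2 * ((F x * F z) * R z) + ENNReal.ofReal ((f z - f x) ^ 2) * R z
          = (2 * (F x * F z) + ENNReal.ofReal ((f z - f x) ^ 2)) * R z := by ring
        _ = (F x ^ 2 + F z ^ 2) * R z := by rw [hpt x z]
        _ = F x ^ 2 * R z + F z ^ 2 * R z := by ring
    rw [hA, hFT, hMassdef, hMass'def, hNgapdef, ← lintegral_const_mul 2 hIFFm,
      ← lintegral_add_left (hIFFm.const_mul 2), ← lintegral_add_left hIMm]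
    exact lintegral_congr key
  -- Step B' : symmetry
  have hMM' : Mass' = Mass := by
    set W : Θ → ENNReal := fun y => ∫⁻ z, F z ^ 2 * R z ∂(M y) with hWdef
    set Vv : Θ → ENNReal := fun y => ∫⁻ z, R z ∂(M y) with hVvdef
    have hWm : Measurable W :=
      Measurable.lintegral_kernel_prod_right' (κ := M)
        (((hFm.comp measurable_snd).pow_const 2).mul (hRm.comp measurable_snd))
    have hVvm : Measurable Vv :=
      Measurable.lintegral_kernel_prod_right' (κ := M) (hRm.comp measurable_snd)
    have h1 : Mass' = ∫⁻ y, Vv y * W y ∂πcur := by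
      calc Mass' = ∫⁻ x, R x * (∫⁻ z, F z ^ 2 * R z ∂(N x)) ∂πcur := hprev hIM'm
        _ = ∫⁻ x, ∫⁻ y, R x * W y ∂(M x) ∂πcur := by
            refine lintegral_congr fun x => ?_
            rw [hbind (g := fun z => F z ^ 2 * R z) ((hFm.pow_const 2).mul hRm) x, ← lintegral_const_mul (R x) hWm]
        _ = ∫⁻ y, ∫⁻ x, R x * W y ∂(M y) ∂πcur :=
            rev_swap πcur M hrev ((hRm.comp measurable_fst).mul (hWm.comp measurable_snd))
        _ = ∫⁻ y, Vv y * W y ∂πcur :=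
            lintegral_congr fun y => lintegral_mul_const _ hRm
    have h2 : Mass = ∫⁻ y, W y * Vv y ∂πcur := by
      calc Mass = ∫⁻ x, R x * (∫⁻ z, F x ^ 2 * R z ∂(N x)) ∂πcur := hprev hIMm
        _ = ∫⁻ x, ∫⁻ y, (R x * F x ^ 2) * Vv y ∂(M x) ∂πcur := by
            refine lintegral_congr fun x => ?_
            rw [lintegral_const_mul (F x ^ 2) hRm, ← mul_assoc, hbind hRm x]
            exact (lintegral_const_mul (R x * F x ^ 2) hVvm).symm
        _ = ∫⁻ y, ∫⁻ x, (R x * F x ^ 2) * Vv y ∂(M y) ∂πcur :=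
            rev_swap πcur M hrev
              (((hRm.comp measurable_fst).mul ((hFm.comp measurable_fst).pow_const 2)).mul
                (hVvm.comp measurable_snd))
        _ = ∫⁻ y, W y * Vv y ∂πcur := by
            refine lintegral_congr fun y => ?_
            rw [lintegral_mul_const (f := fun x => R x * F x ^ 2) _ (hRm.mul (hFm.pow_const 2))]
            congr 1
            exact lintegral_congr fun x => by ring
    rw [h1, h2]
    exact lintegral_congr fun y => mul_comm _ _
  -- the L² norm
  set I2r : ℝ := ∫ x, (f x) ^ 2 ∂πprev with hI2rdef
  have hfint : Integrable f πprev := by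
    refine ((integrable_const (1:ℝ)).add hfL2).mono' hfmeas.aestronglyMeasurable
      (Filter.Eventually.of_forall fun x => ?_)
    simp only [Pi.add_apply, Real.norm_eq_abs, abs_of_nonneg (hfnonneg x)]
    nlinarith [sq_nonneg (f x - 1)]
  have hvar : varI πprev f = I2r - 1 := by
    rw [varI, hfdens, one_pow]
  have hVar0 : 0 ≤ varI πprev f := by
    have hint1 : Integrable (fun x => f x ^ 2 - 2 * f x) πprev :=
      hfL2.sub (hfint.const_mul 2)
    have h1 : 0 ≤ ∫ x, (f x - 1) ^ 2 ∂πprev := integral_nonneg fun x => sq_nonneg _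
    have h2 : ∫ x, (f x - 1) ^ 2 ∂πprev = I2r - 2 + 1 := by
      have e : (fun x => (f x - 1) ^ 2) = fun x => (f x ^ 2 - 2 * f x) + 1 := by
        funext x; ring
      rw [e, integral_add hint1 (integrable_const 1),
        integral_sub hfL2 (hfint.const_mul 2), integral_const_mul, hfdens, integral_const]
      simp [hπprev.measure_univ]
      rfl
    rw [hvar]; linarith
  have hI2r1 : 1 ≤ I2r := by linarith [hVar0, hvar.symm.le, hvar.le]
  have hI2 : ∫⁻ x, F x ^ 2 ∂πprev = ENNReal.ofReal I2r := by
    rw [hI2rdef, ofReal_integral_eq_lintegral_ofReal hfL2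
      (Filter.Eventually.of_forall fun x => sq_nonneg _)]
    exact lintegral_congr fun x => by
      rw [hFdef]; exact (ENNReal.ofReal_pow (hfnonneg x) 2).symm
  set L : Θ → ENNReal := fun x => ∫⁻ z, ENNReal.ofReal |r z - 1| ∂(N x) with hLdef
  have hLm : Measurable L :=
    Measurable.lintegral_kernel_prod_right' (κ := N)
      (((hrmeas.comp measurable_snd).sub measurable_const).abs.ennreal_ofReal)
  have hLbd : ∀ x, L x ≤ ENNReal.ofReal (ρ + 1) := by
    intro x
    calc L x ≤ ∫⁻ _, ENNReal.ofReal (ρ + 1) ∂(N x) := by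
          refine lintegral_mono fun z => ENNReal.ofReal_le_ofReal ?_
          cases abs_cases (r z - 1) <;> [skip; skip] <;>
            · rename_i h; rw [h.1]; nlinarith [hrnonneg z, hρ z]
      _ = ENNReal.ofReal (ρ + 1) := by simp [lintegral_const]
  have hLfin : ∀ x, L x ≠ ⊤ := fun x => ne_top_of_le_ne_top ENNReal.ofReal_ne_top (hLbd x)
  set A : ENNReal := ∫⁻ x, F x ^ 2 * L x ∂πprev with hAdef
  -- Step C : Mass ≤ I2 + A
  have hC : Mass ≤ ENNReal.ofReal I2r + A := by
    have hK : ∀ x, (∫⁻ z, R z ∂(N x)) ≤ 1 + L x := by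
      intro x
      have hpt : ∀ z, R z ≤ ENNReal.ofReal 1 + ENNReal.ofReal |r z - 1| := by
        intro z
        rw [← ENNReal.ofReal_add (by norm_num) (abs_nonneg _)]
        refine ENNReal.ofReal_le_ofReal ?_
        cases abs_cases (r z - 1) <;> [skip; skip] <;>
          · rename_i h; rw [h.1]; nlinarith [hrnonneg z]
      calc (∫⁻ z, R z ∂(N x)) ≤ ∫⁻ z, (ENNReal.ofReal 1 + ENNReal.ofReal |r z - 1|) ∂(N x) :=
            lintegral_mono hpt
        _ = 1 + L x := by
            rw [lintegral_add_left measurable_const]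
            simp [lintegral_const]
            rfl
    calc Mass = ∫⁻ x, F x ^ 2 * (∫⁻ z, R z ∂(N x)) ∂πprev :=
          lintegral_congr fun x => lintegral_const_mul _ hRm
      _ ≤ ∫⁻ x, (F x ^ 2 + F x ^ 2 * L x) ∂πprev := by
          refine lintegral_mono fun x => ?_
          calc F x ^ 2 * (∫⁻ z, R z ∂(N x)) ≤ F x ^ 2 * (1 + L x) :=
                mul_le_mul_right (hK x) _
            _ = F x ^ 2 + F x ^ 2 * L x := by rw [mul_add, mul_one]
      _ = ENNReal.ofReal I2r + A := by
          rw [lintegral_add_left (hFm.pow_const 2), hI2]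
  -- Step D : A ≤ ofReal (I2r * α)  and  0 ≤ α
  set α : ℝ := discrepancy πprev M r with hαdef
  have hD : 0 ≤ α ∧ A ≤ ENNReal.ofReal (I2r * α) := by
    set h : Θ → ℝ := fun x => (L x).toReal with hhdef
    have hhm : Measurable h := hLm.ennreal_toReal
    have hh0 : ∀ x, 0 ≤ h x := fun _ => ENNReal.toReal_nonneg
    have hhbd : ∀ x, h x ≤ ρ + 1 := by
      intro x
      have hm := ENNReal.toReal_mono ENNReal.ofReal_ne_top (hLbd x)
      rwa [ENNReal.toReal_ofReal (by linarith)] at hm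
    have hh_eq : ∀ x : Θ, (∫ z, |r z - 1| ∂((M x).bind (fun y => M y))) = h x := by
      intro x
      have hb : ((M x).bind (fun y => M y)) = N x := (hNx x).symm
      rw [hb, integral_eq_lintegral_of_nonneg_ae (f := fun z => |r z - 1|)
        (Filter.Eventually.of_forall fun z => abs_nonneg _)
        ((hrmeas.sub measurable_const).abs.aestronglyMeasurable)]
    have hnormbd : ∀ x, ‖h x‖ ≤ ρ + 1 := fun x => by
      rw [Real.norm_eq_abs, abs_of_nonneg (hh0 x)]; exact hhbd x
    have hbddA : BddAbove {a : ℝ | ∃ f' : Θ → ℝ, Measurable f' ∧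
        Integrable (fun x => (f' x) ^ 2) πprev ∧ (∫ x, (f' x) ^ 2 ∂πprev) = 1 ∧
        a = ∫ x, (f' x) ^ 2 * (∫ z, |r z - 1| ∂((M x).bind (fun y => M y))) ∂πprev} := by
      refine ⟨ρ + 1, ?_⟩
      rintro a ⟨f', hf'm, hf'int, hf'norm, rfl⟩
      have hint : Integrable (fun x => h x * f' x ^ 2) πprev :=
        hf'int.bdd_mul hhm.aestronglyMeasurable (Filter.Eventually.of_forall hnormbd)
      calc ∫ x, f' x ^ 2 * (∫ z, |r z - 1| ∂((M x).bind (fun y => M y))) ∂πprev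
          = ∫ x, h x * f' x ^ 2 ∂πprev := by
            refine integral_congr_ae (Filter.Eventually.of_forall fun x => ?_)
            simp only []
            rw [hh_eq x, mul_comm]
        _ ≤ ∫ x, (ρ + 1) * f' x ^ 2 ∂πprev := by
            refine integral_mono hint (hf'int.const_mul _) fun x => ?_
            exact mul_le_mul_of_nonneg_right (hhbd x) (sq_nonneg _)
        _ = ρ + 1 := by rw [integral_const_mul, hf'norm, mul_one]
    have hI2rne : I2r ≠ 0 := by linarith
    set g : Θ → ℝ := fun x => f x / Real.sqrt I2r with hgdef
    have hg2 : ∀ x, g x ^ 2 = f x ^ 2 / I2r := by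
      intro x
      rw [hgdef]
      simp only []
      rw [div_pow, Real.sq_sqrt (by linarith : (0:ℝ) ≤ I2r)]
    have hgm : Measurable g := hfmeas.div_const _
    have hgint : Integrable (fun x => g x ^ 2) πprev := by
      have e : (fun x => g x ^ 2) = fun x => f x ^ 2 / I2r := funext hg2
      rw [e]; exact hfL2.div_const _
    have hgnorm : (∫ x, g x ^ 2 ∂πprev) = 1 := by
      have e : (fun x => g x ^ 2) = fun x => f x ^ 2 / I2r := funext hg2
      rw [e, integral_div, div_self hI2rne]
    have hα_ge : (∫ x, g x ^ 2 * (∫ z, |r z - 1| ∂((M x).bind (fun y => M y))) ∂πprev) ≤ α :=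
      le_csSup hbddA ⟨g, hgm, hgint, hgnorm, rfl⟩
    have ha0 : 0 ≤ ∫ x, g x ^ 2 * (∫ z, |r z - 1| ∂((M x).bind (fun y => M y))) ∂πprev :=
      integral_nonneg fun x => mul_nonneg (sq_nonneg _) (integral_nonneg fun z => abs_nonneg _)
    refine ⟨le_trans ha0 hα_ge, ?_⟩
    have hfh_int : Integrable (fun x => f x ^ 2 * h x) πprev := by
      have hint := hfL2.bdd_mul hhm.aestronglyMeasurable (Filter.Eventually.of_forall hnormbd)
      simpa [mul_comm] using hint
    have hAeq : A = ENNReal.ofReal (∫ x, f x ^ 2 * h x ∂πprev) := by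
      rw [ofReal_integral_eq_lintegral_ofReal hfh_int
        (Filter.Eventually.of_forall fun x => mul_nonneg (sq_nonneg _) (hh0 x))]
      refine lintegral_congr fun x => ?_
      rw [ENNReal.ofReal_mul (sq_nonneg _)]
      congr 1
      · rw [hFdef]; exact (ENNReal.ofReal_pow (hfnonneg x) 2).symm
      · exact (ENNReal.ofReal_toReal (hLfin x)).symm
    have hsum : ∫ x, g x ^ 2 * (∫ z, |r z - 1| ∂((M x).bind (fun y => M y))) ∂πprev
        = (∫ x, f x ^ 2 * h x ∂πprev) / I2r := by
      rw [← integral_div]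
      refine integral_congr_ae (Filter.Eventually.of_forall fun x => ?_)
      simp only []
      rw [hh_eq x, hg2 x]
      ring
    rw [hAeq]
    refine ENNReal.ofReal_le_ofReal ?_
    have e : (∫ x, f x ^ 2 * h x ∂πprev)
        = I2r * (∫ x, g x ^ 2 * (∫ z, |r z - 1| ∂((M x).bind (fun y => M y))) ∂πprev) := by
      rw [hsum]; field_simp
    rw [e]
    exact mul_le_mul_of_nonneg_left hα_ge (by linarith)
  obtain ⟨hα0, hAle⟩ := hD
  -- Step E : gap bound
  set lam : ℝ := specGap πprev M r with hlamdef
  set V : ℝ := varI πprev f with hVdef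
  have hQlint : ∀ {g : Θ → ENNReal}, Measurable g → ∀ x : Θ,
      ∫⁻ z, g z ∂(Qmeas M r x) = ∫⁻ z, g z * R z ∂(N x) := by
    intro g hg x
    have hunc : Measurable (Function.uncurry fun (_ : Θ) z => ENNReal.ofReal (r z)) :=
      hrmeas.ennreal_ofReal.comp measurable_snd
    have hb : (fun y => (M y).withDensity fun z => ENNReal.ofReal (r z))
        = ⇑(M.withDensity fun _ z => ENNReal.ofReal (r z)) := by
      funext y
      rw [Kernel.withDensity_apply M hunc]
    rw [Qmeas, hb, Measure.lintegral_bind (Kernel.measurable _).aemeasurable hg.aemeasurable, hNx x,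
      Measure.lintegral_bind (f := fun z => g z * R z) M.measurable.aemeasurable (hg.mul hRm).aemeasurable]
    refine lintegral_congr fun y => ?_
    rw [Kernel.withDensity_apply M hunc,
      lintegral_withDensity_eq_lintegral_mul _ hrmeas.ennreal_ofReal hg]
    exact lintegral_congr fun z => mul_comm _ _
  have hE : ENNReal.ofReal (2 * lam * V) ≤ Ngap := by
    rcases eq_or_lt_of_le hVar0 with hV0 | hVpos
    · rw [← hV0, mul_zero, ENNReal.ofReal_zero]
      exact zero_le
    · set w : Θ → ℝ := fun x => ∫ y, (f y - f x) ^ 2 ∂(Qmeas M r x) with hwdef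
      have hw0 : ∀ x, 0 ≤ w x := fun x => integral_nonneg fun y => sq_nonneg _
      have hDen : (∫ x, (∫ y, (f y - f x) ^ 2 ∂πprev) ∂πprev) = 2 * V := by
        have hinner : ∀ x, (∫ y, (f y - f x) ^ 2 ∂πprev) = (I2r - 2 * f x) + f x ^ 2 := by
          intro x
          have hint1 : Integrable (fun y => f y ^ 2 - (2 * f x) * f y) πprev :=
            hfL2.sub (hfint.const_mul _)
          have e : (fun y => (f y - f x) ^ 2)
              = fun y => (f y ^ 2 - (2 * f x) * f y) + f x ^ 2 := by
            funext y; ring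
          rw [e, integral_add hint1 (integrable_const _),
            integral_sub hfL2 (hfint.const_mul _), integral_const_mul, hfdens, integral_const]
          simp [hπprev.measure_univ]
          rfl
        have e2 : (fun x => (∫ y, (f y - f x) ^ 2 ∂πprev)) = fun x => (I2r - 2 * f x) + f x ^ 2 :=
          funext hinner
        have hint2 : Integrable (fun x => I2r - 2 * f x) πprev :=
          (integrable_const _).sub (hfint.const_mul 2)
        rw [e2, integral_add hint2 hfL2, integral_sub (integrable_const _) (hfint.const_mul 2),
          integral_const_mul, hfdens, integral_const]
        simp only [hπprev.measure_univ, probReal_univ, ENNReal.toReal_one, smul_eq_mul, one_mul, mul_one]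
        linarith [hvar, hI2rdef]
      have hbddb : BddBelow {a : ℝ | ∃ f' : Θ → ℝ, Measurable f' ∧
          Integrable (fun x => (f' x) ^ 2) πprev ∧ 0 < varI πprev f' ∧
          a = (∫ x, (∫ y, (f' y - f' x) ^ 2 ∂(Qmeas M r x)) ∂πprev) /
            (∫ x, (∫ y, (f' y - f' x) ^ 2 ∂πprev) ∂πprev)} := by
        refine ⟨0, ?_⟩
        rintro a ⟨f', _, _, _, rfl⟩
        exact div_nonneg (integral_nonneg fun x => integral_nonneg fun y => sq_nonneg _)
          (integral_nonneg fun x => integral_nonneg fun y => sq_nonneg _)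
      have hlam_le : lam * (2 * V) ≤ ∫ x, w x ∂πprev := by
        have hmemle : lam ≤ (∫ x, (∫ y, (f y - f x) ^ 2 ∂(Qmeas M r x)) ∂πprev) /
            (∫ x, (∫ y, (f y - f x) ^ 2 ∂πprev) ∂πprev) :=
          csInf_le hbddb ⟨f, hfmeas, hfL2, hVpos, rfl⟩
        rw [hDen] at hmemle
        have h2V : (0:ℝ) < 2 * V := by linarith
        calc lam * (2 * V) ≤ ((∫ x, w x ∂πprev) / (2 * V)) * (2 * V) :=
              mul_le_mul_of_nonneg_right hmemle h2V.le
          _ = ∫ x, w x ∂πprev := by field_simp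
      have hw_eq : ∀ x, w x = (∫⁻ z, ENNReal.ofReal ((f z - f x) ^ 2) * R z ∂(N x)).toReal := by
        intro x
        rw [hwdef]
        simp only []
        rw [integral_eq_lintegral_of_nonneg_ae (f := fun y => (f y - f x) ^ 2)
          (Filter.Eventually.of_forall fun y => sq_nonneg _)
          ((hfmeas.sub measurable_const).pow_const 2).aestronglyMeasurable,
          hQlint (g := fun z => ENNReal.ofReal ((f z - f x) ^ 2)) ((hfmeas.sub measurable_const).pow_const 2).ennreal_ofReal x]
      have hofN : ENNReal.ofReal (∫ x, w x ∂πprev) ≤ Ngap := by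
        by_cases hint : Integrable w πprev
        · rw [ofReal_integral_eq_lintegral_ofReal hint (Filter.Eventually.of_forall hw0)]
          calc ∫⁻ x, ENNReal.ofReal (w x) ∂πprev
              ≤ ∫⁻ x, (∫⁻ z, ENNReal.ofReal ((f z - f x) ^ 2) * R z ∂(N x)) ∂πprev := by
                refine lintegral_mono fun x => ?_
                rw [hw_eq x]
                exact ENNReal.ofReal_toReal_le
            _ = Ngap := rfl
        · rw [integral_undef hint]
          simp
      refine le_trans (ENNReal.ofReal_le_ofReal ?_) hofN
      calc 2 * lam * V = lam * (2 * V) := by ring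
        _ ≤ ∫ x, w x ∂πprev := hlam_le
  -- finiteness
  have hMassle : Mass ≤ ENNReal.ofReal I2r + ENNReal.ofReal (I2r * α) :=
    le_trans hC (add_le_add_right hAle _)
  have hMassfin : Mass ≠ ⊤ :=
    ne_top_of_le_ne_top (by simp) hMassle
  have h2B : 2 * B + Ngap = 2 * Mass := by rw [hE1, hMM', two_mul]
  have hBfin : B ≠ ⊤ := by
    have : 2 * B ≤ 2 * Mass := le_trans le_self_add h2B.le
    have hB' : B ≤ Mass := by
      rwa [ENNReal.mul_le_mul_iff_right (by norm_num) (by norm_num)] at this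
    exact ne_top_of_le_ne_top hMassfin hB'
  have hNgapfin : Ngap ≠ ⊤ := by
    have : Ngap ≤ 2 * Mass := le_trans le_add_self h2B.le
    exact ne_top_of_le_ne_top (by simp [hMassfin, ENNReal.mul_ne_top]) this
  -- variance of mbar
  have hvarcur : varI πcur (mbar M r f) = B.toReal - 1 := by
    have hmbar : ∀ u, mbar M r f u = (G u).toReal := by
      intro u
      rw [mbar, integral_eq_lintegral_of_nonneg_ae
        (Filter.Eventually.of_forall fun v => mul_nonneg (hfnonneg v) (hrnonneg v))
        (hfmeas.mul hrmeas).aestronglyMeasurable]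
      congr 1
      exact lintegral_congr fun v => ENNReal.ofReal_mul (hfnonneg v)
    have hG1 : ∫⁻ u, G u ∂πcur = 1 := by
      rw [hGdef]
      rw [rev_invariant πcur M hrev hFRm]
      have e : ∫⁻ v, F v * R v ∂πcur = ∫⁻ v, F v ∂πprev := by
        rw [hprev hFm]
        exact lintegral_congr fun v => mul_comm _ _
      rw [e, ← ofReal_integral_eq_lintegral_ofReal hfint
        (Filter.Eventually.of_forall hfnonneg), hfdens, ENNReal.ofReal_one]
    have hGae : ∀ᵐ u ∂πcur, G u < ⊤ := ae_lt_top hGm (by rw [hG1]; exact ENNReal.one_ne_top)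
    have hmean : ∫ u, mbar M r f u ∂πcur = 1 := by
      have e : (fun u => mbar M r f u) = fun u => (G u).toReal := funext hmbar
      rw [e, integral_eq_lintegral_of_nonneg_ae
        (Filter.Eventually.of_forall fun u => ENNReal.toReal_nonneg)
        hGm.ennreal_toReal.aestronglyMeasurable]
      have e2 : ∫⁻ u, ENNReal.ofReal ((G u).toReal) ∂πcur = ∫⁻ u, G u ∂πcur :=
        lintegral_congr_ae (hGae.mono fun u hu => ENNReal.ofReal_toReal hu.ne)
      rw [e2, hG1]; simp
    have hsq : ∫ u, (mbar M r f u) ^ 2 ∂πcur = B.toReal := by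
      have e : (fun u => (mbar M r f u) ^ 2) = fun u => ((G u).toReal) ^ 2 :=
        funext fun u => by rw [hmbar u]
      rw [e, integral_eq_lintegral_of_nonneg_ae
        (Filter.Eventually.of_forall fun u => sq_nonneg _)
        (hGm.ennreal_toReal.pow_const 2).aestronglyMeasurable]
      congr 1
      refine lintegral_congr_ae (hGae.mono fun u hu => ?_)
      show ENNReal.ofReal ((G u).toReal ^ 2) = G u ^ 2
      rw [ENNReal.ofReal_pow ENNReal.toReal_nonneg, ENNReal.ofReal_toReal hu.ne]
    rw [varI, hsq, hmean, one_pow]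
  -- real-valued consequences
  have hreal : 2 * B.toReal + Ngap.toReal = 2 * Mass.toReal := by
    have := congrArg ENNReal.toReal h2B
    rwa [ENNReal.toReal_add (by simp [hBfin, ENNReal.mul_ne_top]) hNgapfin,
      ENNReal.toReal_mul, ENNReal.toReal_mul, ENNReal.toReal_ofNat] at this
  have hgapreal : 2 * lam * V ≤ Ngap.toReal := by
    have h1 := ENNReal.toReal_mono hNgapfin hE
    rcases le_or_gt (2 * lam * V) 0 with h | h
    · exact le_trans h ENNReal.toReal_nonneg
    · rwa [ENNReal.toReal_ofReal h.le] at h1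
  have hmassreal : Mass.toReal ≤ I2r + I2r * α := by
    have h1 := ENNReal.toReal_mono (by simp) hMassle
    rwa [ENNReal.toReal_add ENNReal.ofReal_ne_top ENNReal.ofReal_ne_top,
      ENNReal.toReal_ofReal (by linarith), ENNReal.toReal_ofReal
        (mul_nonneg (by linarith) hα0)] at h1
  have hI2rV : I2r = V + 1 := by linarith [hvar]
  -- conclude
  rw [hvarcur]
  have hb : B.toReal + lam * V ≤ I2r + I2r * α := by nlinarith [hreal, hgapreal, hmassreal]
  nlinarith [hb, hI2rV, hα0, hVar0]
end

section
/- Let {M_t, 0 ≤ t ≤ L} be Markov kernels on Θ and Π a probability measure. Suppose there exist constants 0 < ω < 1 and T ∈ ℕ, T < L, such that the composed kernel ∏_{t=0}^{T} M_t admits the mixture decomposition ∏_{t=0}^{T} M_t(θ, ·) = ω H(·) + (1 − ω) R_T(θ, ·) for every θ, where H is a probability measure and R_T a Markov kernel. Then for every θ, ‖ ∏_{s=0}^{L} M_s(θ, ·) − Π ‖_tv ≤ ‖ H ∏_{s=T+1}^{L} M_s − Π ‖_tv + 2(1 − ω). -/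
open MeasureTheory ProbabilityTheory

/-- Total variation distance `‖μ − ν‖_tv = sup_{f : |f| ≤ 1} |μ(f) − ν(f)|`. -/
noncomputable def tvDist {Θ : Type*} [MeasurableSpace Θ] (μ ν : Measure Θ) : ℝ :=
  sSup {r : ℝ | ∃ f : Θ → ℝ, Measurable f ∧ (∀ x, |f x| ≤ 1) ∧
    r = |(∫ x, f x ∂μ) - ∫ x, f x ∂ν|}

/-- `composeK M n θ = (M_0 M_1 ⋯ M_n)(θ, ·)`, the law after applying kernels `M_0,…,M_n`
starting from `θ`. -/
noncomputable def composeK {Θ : Type*} [MeasurableSpace Θ] (M : ℕ → Kernel Θ Θ) :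
    ℕ → Θ → Measure Θ
  | 0, θ => M 0 θ
  | n + 1, θ => (composeK M n θ).bind (fun y => M (n + 1) y)

/-- `runFrom M μ a n`: the law obtained from `μ` after applying kernels `M_{a+1},…,M_{a+n}`. -/
noncomputable def runFrom {Θ : Type*} [MeasurableSpace Θ] (M : ℕ → Kernel Θ Θ)
    (μ : Measure Θ) (a : ℕ) : ℕ → Measure Θ
  | 0 => μ
  | n + 1 => (runFrom M μ a n).bind (fun y => M (a + n + 1) y)

lemma runFrom_prob {Θ : Type*} [MeasurableSpace Θ] (M : ℕ → Kernel Θ Θ)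
    (hM : ∀ t, IsMarkovKernel (M t)) (μ : Measure Θ) (hμ : IsProbabilityMeasure μ)
    (a n : ℕ) : IsProbabilityMeasure (runFrom M μ a n) := by
  induction n with
  | zero => exact hμ
  | succ n ih =>
    constructor
    rw [runFrom, Measure.bind_apply MeasurableSet.univ (Kernel.measurable _).aemeasurable]
    have := hM (a + n + 1)
    simp [measure_univ, ih.measure_univ]

lemma runFrom_add_smul {Θ : Type*} [MeasurableSpace Θ] (M : ℕ → Kernel Θ Θ)
    (μ ν : Measure Θ) (c d : ENNReal) (a n : ℕ) :
    runFrom M (c • μ + d • ν) a n = c • runFrom M μ a n + d • runFrom M ν a n := by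
  induction n with
  | zero => rfl
  | succ n ih =>
    show (runFrom M (c • μ + d • ν) a n).bind _ = _
    rw [ih]
    change Measure.bind _ (M (a + n + 1) : Θ → Measure Θ) = _
    rw [show ∀ (μ' ν' : Measure Θ), (μ' + ν').bind (M (a + n + 1) : Θ → Measure Θ) =
        μ'.bind (M (a + n + 1) : Θ → Measure Θ) + ν'.bind (M (a + n + 1) : Θ → Measure Θ) from fun μ' ν' => by
          ext s hs
          simp [Measure.bind_apply hs (M (a + n + 1)).measurable.aemeasurable,
            lintegral_add_measure],
      Measure.bind_smul, Measure.bind_smul]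
    rfl

lemma composeK_eq_runFrom {Θ : Type*} [MeasurableSpace Θ] (M : ℕ → Kernel Θ Θ)
    (T n : ℕ) (θ : Θ) : composeK M (T + n) θ = runFrom M (composeK M T θ) T n := by
  induction n with
  | zero => rfl
  | succ n ih =>
    show (composeK M (T + n) θ).bind _ = (runFrom M (composeK M T θ) T n).bind _
    rw [ih]
    rfl

lemma integrable_of_abs_le_one {Θ : Type*} [MeasurableSpace Θ] (μ : Measure Θ)
    [IsFiniteMeasure μ] {f : Θ → ℝ} (hf : Measurable f) (hb : ∀ x, |f x| ≤ 1) :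
    Integrable f μ :=
  ⟨hf.aestronglyMeasurable,
    MeasureTheory.HasFiniteIntegral.of_bounded (C := 1)
      (Filter.Eventually.of_forall fun x => by simpa [Real.norm_eq_abs] using hb x)⟩

lemma abs_integral_le_one {Θ : Type*} [MeasurableSpace Θ] (μ : Measure Θ)
    [IsProbabilityMeasure μ] {f : Θ → ℝ} (hf : Measurable f) (hb : ∀ x, |f x| ≤ 1) :
    |∫ x, f x ∂μ| ≤ 1 := by
  calc |∫ x, f x ∂μ| ≤ ∫ x, |f x| ∂μ := by
        simpa [Real.norm_eq_abs] using norm_integral_le_integral_norm (μ := μ) f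
    _ ≤ ∫ _x, (1 : ℝ) ∂μ := by
        refine integral_mono ((integrable_of_abs_le_one μ hf hb).abs) (integrable_const 1)
          fun x => hb x
    _ = 1 := by simp

lemma tvDist_bddAbove {Θ : Type*} [MeasurableSpace Θ] (μ ν : Measure Θ)
    [IsProbabilityMeasure μ] [IsProbabilityMeasure ν] :
    BddAbove {r : ℝ | ∃ f : Θ → ℝ, Measurable f ∧ (∀ x, |f x| ≤ 1) ∧
      r = |(∫ x, f x ∂μ) - ∫ x, f x ∂ν|} := by
  refine ⟨2, fun r hr => ?_⟩
  obtain ⟨f, hf, hb, rfl⟩ := hr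
  calc |(∫ x, f x ∂μ) - ∫ x, f x ∂ν| ≤ |∫ x, f x ∂μ| + |∫ x, f x ∂ν| := abs_sub _ _
    _ ≤ 1 + 1 := add_le_add (abs_integral_le_one μ hf hb) (abs_integral_le_one ν hf hb)
    _ = 2 := by norm_num

lemma tvDist_nonneg {Θ : Type*} [MeasurableSpace Θ] (μ ν : Measure Θ)
    [IsProbabilityMeasure μ] [IsProbabilityMeasure ν] : 0 ≤ tvDist μ ν := by
  refine le_csSup (tvDist_bddAbove μ ν) ⟨0, measurable_const, fun x => by simp, by simp⟩

/- STATEMENT 19: If the composed kernel `∏_{t=0}^{T} M_t` admits the mixture decomposition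
`∏_{t=0}^{T} M_t(θ,·) = ω H(·) + (1−ω) R_T(θ,·)` for every `θ`, then for every `θ`,
`‖∏_{s=0}^{L} M_s(θ,·) − Π‖_tv ≤ ‖H ∏_{s=T+1}^{L} M_s − Π‖_tv + 2(1−ω)`. -/
theorem truncation_remark
    {Θ : Type*} [MeasurableSpace Θ]
    (M : ℕ → Kernel Θ Θ) (hM : ∀ t, IsMarkovKernel (M t))
    (Pi : Measure Θ) (hPi : IsProbabilityMeasure Pi)
    (L T : ℕ) (hTL : T < L)
    (ω : ℝ) (hω0 : 0 < ω) (hω1 : ω < 1)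
    (H : Measure Θ) (hH : IsProbabilityMeasure H)
    (R : Kernel Θ Θ) (hR : IsMarkovKernel R)
    (hdecomp : ∀ θ : Θ, composeK M T θ =
      ENNReal.ofReal ω • H + ENNReal.ofReal (1 - ω) • R θ) :
    ∀ θ : Θ, tvDist (composeK M L θ) Pi ≤
      tvDist (runFrom M H T (L - T)) Pi + 2 * (1 - ω) := by
  intro θ
  set n := L - T with hn
  set A := runFrom M H T n with hA
  set B := runFrom M (R θ) T n with hB
  have hAp : IsProbabilityMeasure A := runFrom_prob M hM H hH T n
  have hBp : IsProbabilityMeasure B := runFrom_prob M hM (R θ) (hR.isProbabilityMeasure θ) T n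
  have hLTn : L = T + n := by omega
  have key : composeK M L θ = ENNReal.ofReal ω • A + ENNReal.ofReal (1 - ω) • B := by
    rw [hLTn, composeK_eq_runFrom, hdecomp θ, runFrom_add_smul]
  have hω0' : (0:ℝ) ≤ ω := hω0.le
  have hω1' : (0:ℝ) ≤ 1 - ω := by linarith
  have hωne : ENNReal.ofReal ω ≠ 0 := by
    simpa [ENNReal.ofReal_eq_zero, not_le] using hω0
  have hω1ne : ENNReal.ofReal (1 - ω) ≠ 0 := by
    simp [ENNReal.ofReal_eq_zero, not_le]; linarith
  have htv0 : 0 ≤ tvDist A Pi := tvDist_nonneg A Pi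
  refine Real.sSup_le ?_ (by linarith)
  rintro r ⟨f, hf, hb, rfl⟩
  have hIA : Integrable f A := integrable_of_abs_le_one A hf hb
  have hIB : Integrable f B := integrable_of_abs_le_one B hf hb
  have hint : (∫ x, f x ∂(composeK M L θ)) =
      ω * (∫ x, f x ∂A) + (1 - ω) * (∫ x, f x ∂B) := by
    rw [key, integral_add_measure, integral_smul_measure, integral_smul_measure,
      ENNReal.toReal_ofReal hω0', ENNReal.toReal_ofReal hω1']
    · simp [smul_eq_mul]
    · exact (integrable_smul_measure hωne ENNReal.ofReal_ne_top).mpr hIA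
    · exact (integrable_smul_measure hω1ne ENNReal.ofReal_ne_top).mpr hIB
  have h1 : |(∫ x, f x ∂A) - ∫ x, f x ∂Pi| ≤ tvDist A Pi :=
    le_csSup (tvDist_bddAbove A Pi) ⟨f, hf, hb, rfl⟩
  have h2 : |(∫ x, f x ∂B) - ∫ x, f x ∂Pi| ≤ 2 := by
    calc |(∫ x, f x ∂B) - ∫ x, f x ∂Pi| ≤ |∫ x, f x ∂B| + |∫ x, f x ∂Pi| := abs_sub _ _
      _ ≤ 1 + 1 := add_le_add (abs_integral_le_one B hf hb) (abs_integral_le_one Pi hf hb)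
      _ = 2 := by norm_num
  have hsplit : (∫ x, f x ∂(composeK M L θ)) - ∫ x, f x ∂Pi =
      ω * ((∫ x, f x ∂A) - ∫ x, f x ∂Pi) + (1 - ω) * ((∫ x, f x ∂B) - ∫ x, f x ∂Pi) := by
    rw [hint]; ring
  calc |(∫ x, f x ∂(composeK M L θ)) - ∫ x, f x ∂Pi|
      ≤ ω * |(∫ x, f x ∂A) - ∫ x, f x ∂Pi| + (1 - ω) * |(∫ x, f x ∂B) - ∫ x, f x ∂Pi| := by
        rw [hsplit]
        refine (abs_add_le _ _).trans ?_
        rw [abs_mul, abs_mul, abs_of_nonneg hω0', abs_of_nonneg hω1']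
    _ ≤ 1 * tvDist A Pi + (1 - ω) * 2 := by
        refine add_le_add (mul_le_mul (by linarith) h1 (abs_nonneg _) zero_le_one)
          (mul_le_mul_of_nonneg_left h2 hω1')
    _ = tvDist A Pi + 2 * (1 - ω) := by ring
end
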